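/- The subgroup R_n' of B_n generated by the flips r_1, …, r_n is a normal subgroup of B_n; equivalently, the normal closure of {r_1, …, r_n} in B_n equals the subgroup generated by {r_1, …, r_n}. -/

import Mathlib

namespace Braid

/-- Braid relations on generators indexed by `Fin m`; the generator `i : Fin m` stands for the
Artin generator `σ_{i+1}` of the braid group on `m+1` strands: the relations are
`σ_i σ_j = σ_j σ_i` for `|i-j| ≥ 2` and `σ_i σ_{i+1} σ_i = σ_{i+1} σ_i σ_{i+1}`. -/
def braidRels (m : ℕ) : Set (FreeGroup (Fin m)) :=
  {r | ∃ i j : Fin m, i.val + 2 ≤ j.val ∧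
      r = .of i * .of j * (.of j * .of i)⁻¹} ∪
  {r | ∃ (i : Fin m) (hij : i.val + 1 < m),
      r = .of i * .of ⟨i.val + 1, hij⟩ * .of i *
        (.of ⟨i.val + 1, hij⟩ * .of i * .of ⟨i.val + 1, hij⟩)⁻¹}

/-- The Artin braid group `B_n` on `n` strands, presented with generators `σ_1, …, σ_{n-1}`
and the braid relations. -/
def BraidGroup (n : ℕ) : Type := PresentedGroup (braidRels (n - 1))

instance (n : ℕ) : Group (BraidGroup n) := by unfold BraidGroup; infer_instance

/-- The Artin generator `σ_i` of `B_n`, for `1 ≤ i ≤ n-1` (junk value `1` otherwise). -/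
def σ (n : ℕ) (i : ℕ) : BraidGroup n :=
  if h : 1 ≤ i ∧ i ≤ n - 1 then PresentedGroup.of ⟨i - 1, by omega⟩ else 1

/-- The ascending product `σ_a σ_{a+1} ⋯ σ_b` (empty product if `b < a`). -/
def up (n a b : ℕ) : BraidGroup n := ((List.range' a (b + 1 - a)).map (σ n)).prod

/-- The descending product `σ_a σ_{a-1} ⋯ σ_b` (empty product if `a < b`). -/
def down (n a b : ℕ) : BraidGroup n :=
  ((List.range' b (a + 1 - b)).reverse.map (σ n)).prod

/-- The full twist `d = (σ_{n-1} ⋯ σ_2 σ_1)^n` of `B_n`. -/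
def fullTwist (n : ℕ) : BraidGroup n := (down n (n - 1) 1) ^ n

/-- The flip `r_i = σ_{i-1} ⋯ σ_2 σ_1^2 σ_2 ⋯ σ_{n-2} σ_{n-1}^2 σ_{n-2} ⋯ σ_i` of `B_n`
(for `1 ≤ i ≤ n`), written as `(σ_{i-1} ⋯ σ_1) (σ_1 ⋯ σ_{n-1}) (σ_{n-1} ⋯ σ_i)`. -/
def flip (n i : ℕ) : BraidGroup n :=
  down n (i - 1) 1 * up n 1 (n - 1) * down n (n - 1) i

/-- The descending product of flips `r_a r_{a-1} ⋯ r_b` (empty product if `a < b`). -/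
def flipsDown (n a b : ℕ) : BraidGroup n :=
  ((List.range' b (a + 1 - b)).reverse.map (flip n)).prod

/-- The subgroup `R_n ⊆ B_n` generated by the full twist `d` and the flips `r_1, …, r_n`. -/
def R (n : ℕ) : Subgroup (BraidGroup n) :=
  Subgroup.closure ({fullTwist n} ∪ flip n '' Set.Icc 1 n)

/-- The subgroup `R_n' ⊆ B_n` generated by the flips `r_1, …, r_n`. -/
def R' (n : ℕ) : Subgroup (BraidGroup n) :=
  Subgroup.closure (flip n '' Set.Icc 1 n)

private lemma swap_braid {n : ℕ} (a b c : Fin n) (hab : a ≠ b) (hbc : b ≠ c) (hac : a ≠ c) :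
    Equiv.swap a b * Equiv.swap b c * Equiv.swap a b
      = Equiv.swap b c * Equiv.swap a b * Equiv.swap b c := by
  have h1 : Equiv.swap b a * Equiv.swap c b * Equiv.swap b a = Equiv.swap a c :=
    Equiv.swap_mul_swap_mul_swap (Ne.symm hbc) hac.symm
  have h2 : Equiv.swap b c * Equiv.swap a b * Equiv.swap b c = Equiv.swap c a :=
    Equiv.swap_mul_swap_mul_swap hab hac
  rw [h2, Equiv.swap_comm a b, Equiv.swap_comm b c, h1, Equiv.swap_comm a c]

private lemma swap_commute {n : ℕ} (a b c d : Fin n)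
    (hac : a ≠ c) (had : a ≠ d) (hbc : b ≠ c) (hbd : b ≠ d) :
    Equiv.swap a b * Equiv.swap c d = Equiv.swap c d * Equiv.swap a b := by
  refine Equiv.Perm.Disjoint.commute ?_
  intro x
  by_cases h1 : x = a
  · subst h1; right; exact Equiv.swap_apply_of_ne_of_ne hac had
  · by_cases h2 : x = b
    · subst h2; right; exact Equiv.swap_apply_of_ne_of_ne hbc hbd
    · left; exact Equiv.swap_apply_of_ne_of_ne h1 h2

/-- The transposition `(i, i+1)` of `Fin n` associated to the generator `i : Fin (n-1)`. -/
def permGen (n : ℕ) (i : Fin (n - 1)) : Equiv.Perm (Fin n) :=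
  Equiv.swap ⟨i.val, by have := i.isLt; omega⟩ ⟨i.val + 1, by have := i.isLt; omega⟩

/-- The homomorphism `B_n → Sym(n)` sending `σ_i` to the transposition `(i, i+1)`. -/
def toPerm (n : ℕ) : BraidGroup n →* Equiv.Perm (Fin n) :=
  PresentedGroup.toGroup (f := permGen n)
    (by
      rintro r (⟨i, j, hij, rfl⟩ | ⟨i, hij, rfl⟩) <;>
        simp only [map_mul, map_inv, FreeGroup.lift_apply_of, permGen] <;> rw [mul_inv_eq_one]
      · refine swap_commute _ _ _ _ ?_ ?_ ?_ ?_ <;>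
          · rw [ne_eq, Fin.mk.injEq]; omega
      · refine swap_braid _ _ _ ?_ ?_ ?_ <;>
          · rw [ne_eq, Fin.mk.injEq]; omega)

/-- The pure braid group `P_n`: the kernel of `B_n → Sym(n)`, `σ_i ↦ (i, i+1)`. -/
def P (n : ℕ) : Subgroup (BraidGroup n) := (toPerm n).ker

private lemma mk_rel_eq_one {m : ℕ} {r : FreeGroup (Fin m)} (h : r ∈ braidRels m) :
    PresentedGroup.mk (braidRels m) r = 1 :=
  (QuotientGroup.eq_one_iff _).mpr (Subgroup.subset_normalClosure h)

lemma σ_comm {n i j : ℕ} (h1 : 1 ≤ i) (h2 : i + 2 ≤ j) (h3 : j ≤ n - 1) :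
    σ n i * σ n j = σ n j * σ n i := by
  have e : ∀ k (hk : 1 ≤ k ∧ k ≤ n - 1),
      σ n k = (PresentedGroup.of ⟨k - 1, by omega⟩ : BraidGroup n) := fun k hk => dif_pos hk
  rw [e i ⟨h1, by omega⟩, e j ⟨by omega, h3⟩]
  have hmem : (FreeGroup.of (⟨i - 1, by omega⟩ : Fin (n-1)) * .of ⟨j - 1, by omega⟩ *
      (.of ⟨j - 1, by omega⟩ * .of ⟨i - 1, by omega⟩)⁻¹) ∈ braidRels (n - 1) :=
    Or.inl ⟨⟨i - 1, by omega⟩, ⟨j - 1, by omega⟩, by show i - 1 + 2 ≤ j - 1; omega, rfl⟩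
  have h := mk_rel_eq_one hmem
  rw [map_mul, map_inv, mul_inv_eq_one, map_mul, map_mul] at h
  exact h

set_option maxHeartbeats 1600000 in
lemma σ_braid {n i : ℕ} (h1 : 1 ≤ i) (h2 : i + 1 ≤ n - 1) :
    σ n i * σ n (i + 1) * σ n i = σ n (i + 1) * σ n i * σ n (i + 1) := by
  have e : ∀ k (hk : 1 ≤ k ∧ k ≤ n - 1),
      σ n k = (PresentedGroup.of ⟨k - 1, by omega⟩ : BraidGroup n) := fun k hk => dif_pos hk
  rw [e i ⟨h1, by omega⟩, e (i + 1) ⟨by omega, h2⟩]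
  have key : (⟨i + 1 - 1, by omega⟩ : Fin (n - 1)) = ⟨(i - 1) + 1, by omega⟩ := by
    rw [Fin.mk.injEq]; omega
  rw [key]
  have hmem : (FreeGroup.of (⟨i - 1, by omega⟩ : Fin (n-1)) * .of ⟨(i-1) + 1, by omega⟩ *
      .of ⟨i - 1, by omega⟩ *
      (.of ⟨(i-1) + 1, by omega⟩ * .of ⟨i - 1, by omega⟩ * .of ⟨(i-1)+1, by omega⟩)⁻¹)
      ∈ braidRels (n - 1) :=
    Or.inr ⟨⟨i - 1, by omega⟩, by show i - 1 + 1 < n - 1; omega, rfl⟩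
  have h := mk_rel_eq_one hmem
  rw [map_mul, map_inv, mul_inv_eq_one, map_mul, map_mul, map_mul, map_mul] at h
  exact h

/-- The canonical homomorphism `ι : B_{n-1} → B_n` determined by `σ_i ↦ σ_i`. -/
def ι (n : ℕ) : BraidGroup (n - 1) →* BraidGroup n :=
  PresentedGroup.toGroup (f := fun i : Fin (n - 1 - 1) => σ n (i.val + 1))
    (by
      rintro r (⟨i, j, hij, rfl⟩ | ⟨i, hij, rfl⟩) <;>
        simp only [map_mul, map_inv, FreeGroup.lift_apply_of] <;> rw [mul_inv_eq_one]
      · exact σ_comm (by omega) (by omega) (by have := j.isLt; omega)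
      · exact σ_braid (by omega) (by have := i.isLt; omega))



section NormalityLemmas

variable {n : ℕ}

lemma sigma_out {i : ℕ} (h : ¬(1 ≤ i ∧ i ≤ n - 1)) : σ n i = 1 := dif_neg h

lemma down_nil {a b : ℕ} (h : a < b) : down n a b = 1 := by
  unfold down
  have h0 : a + 1 - b = 0 := by omega
  rw [h0]; rfl

lemma up_nil {a b : ℕ} (h : b < a) : up n a b = 1 := by
  unfold up
  have h0 : b + 1 - a = 0 := by omega
  rw [h0]; rfl

lemma down_cons {a b : ℕ} (hb : 1 ≤ b) (h : b ≤ a) : down n a b = σ n a * down n (a - 1) b := by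
  unfold down
  have h1 : a + 1 - b = (a - b) + 1 := by omega
  have h2 : a - 1 + 1 - b = a - b := by omega
  have h3 : b + 1 * (a - b) = a := by omega
  rw [h1, h2, List.range'_concat, h3]
  simp

lemma down_concat {a b : ℕ} (h : b ≤ a) : down n a b = down n a (b + 1) * σ n b := by
  unfold down
  have h1 : a + 1 - b = (a - b) + 1 := by omega
  have h2 : a + 1 - (b + 1) = a - b := by omega
  rw [h1, h2, List.range'_succ]
  simp

lemma up_cons {a b : ℕ} (h : a ≤ b) : up n a b = σ n a * up n (a + 1) b := by
  unfold up
  have h1 : b + 1 - a = (b - a) + 1 := by omega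
  have h2 : b + 1 - (a + 1) = b - a := by omega
  rw [h1, h2, List.range'_succ]
  simp

lemma up_concat {a b : ℕ} (h : a ≤ b) (hb : 1 ≤ b) : up n a b = up n a (b - 1) * σ n b := by
  unfold up
  have h1 : b + 1 - a = (b - a) + 1 := by omega
  have h2 : b - 1 + 1 - a = b - a := by omega
  have h3 : a + 1 * (b - a) = b := by omega
  rw [h1, h2, List.range'_concat, h3]
  simp

lemma commute_prod_rev {M : Type*} [Monoid M] (f : ℕ → M) (x : M) {a b : ℕ}
    (h : ∀ k, b ≤ k → k ≤ a → Commute x (f k)) :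
    Commute x (((List.range' b (a + 1 - b)).reverse.map f).prod) := by
  refine Commute.list_prod_right _ _ ?_
  intro y hy
  simp only [List.mem_map, List.mem_reverse, List.mem_range'_1] at hy
  obtain ⟨k, ⟨hk1, hk2⟩, rfl⟩ := hy
  exact h k hk1 (by omega)

lemma commute_prod {M : Type*} [Monoid M] (f : ℕ → M) (x : M) {a b : ℕ}
    (h : ∀ k, b ≤ k → k ≤ a → Commute x (f k)) :
    Commute x (((List.range' b (a + 1 - b)).map f).prod) := by
  refine Commute.list_prod_right _ _ ?_
  intro y hy
  simp only [List.mem_map, List.mem_range'_1] at hy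
  obtain ⟨k, ⟨hk1, hk2⟩, rfl⟩ := hy
  exact h k hk1 (by omega)

lemma sigma_comm' {j k : ℕ} (h : j + 2 ≤ k ∨ k + 2 ≤ j) : Commute (σ n j) (σ n k) := by
  have key : ∀ j k : ℕ, j + 2 ≤ k → Commute (σ n j) (σ n k) := by
    intro j k hjk
    by_cases hj : 1 ≤ j ∧ j ≤ n - 1
    · by_cases hk : 1 ≤ k ∧ k ≤ n - 1
      · exact σ_comm hj.1 hjk hk.2
      · rw [sigma_out hk]; exact Commute.one_right _
    · rw [sigma_out hj]; exact Commute.one_left _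
  rcases h with h | h
  · exact key _ _ h
  · exact (key _ _ h).symm

lemma commute_sigma_down {j a b : ℕ} (h : ∀ k, b ≤ k → k ≤ a → Commute (σ n j) (σ n k)) :
    Commute (σ n j) (down n a b) :=
  commute_prod_rev _ _ h

lemma commute_sigma_up {j a b : ℕ} (h : ∀ k, a ≤ k → k ≤ b → Commute (σ n j) (σ n k)) :
    Commute (σ n j) (up n a b) :=
  commute_prod _ _ h

lemma slide_down {j a b : ℕ} (hb : 1 ≤ b) (hbj : b ≤ j) (hja : j + 1 ≤ a) (han : a ≤ n - 1) :
    σ n j * down n a b = down n a b * σ n (j + 1) := by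
  revert han
  induction a, hja using Nat.le_induction with
  | base =>
    intro han
    have hj1 : 1 ≤ j := le_trans hb hbj
    rw [down_cons hb (by omega : b ≤ j + 1), Nat.add_sub_cancel, down_cons hb (by omega : b ≤ j)]
    have hcomm : Commute (σ n (j + 1)) (down n (j - 1) b) :=
      commute_sigma_down fun k hk1 hk2 =>
        sigma_comm' (j := j + 1) (k := k) (Or.inr (by omega))
    have hbraid := σ_braid hj1 han
    calc σ n j * (σ n (j + 1) * (σ n j * down n (j - 1) b))
        = (σ n j * σ n (j + 1) * σ n j) * down n (j - 1) b := by
          simp [mul_assoc]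
      _ = (σ n (j + 1) * σ n j * σ n (j + 1)) * down n (j - 1) b := by rw [hbraid]
      _ = σ n (j + 1) * (σ n j * (σ n (j + 1) * down n (j - 1) b)) := by
          simp [mul_assoc]
      _ = σ n (j + 1) * (σ n j * (down n (j - 1) b * σ n (j + 1))) := by rw [hcomm.eq]
      _ = σ n (j + 1) * (σ n j * down n (j - 1) b) * σ n (j + 1) := by
          simp [mul_assoc]
  | succ a ha ih =>
    intro han
    rw [down_cons hb (by omega : b ≤ a + 1), Nat.add_sub_cancel]
    have hc : Commute (σ n j) (σ n (a + 1)) :=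
      sigma_comm' (j := j) (k := a + 1) (Or.inl (by omega))
    calc σ n j * (σ n (a + 1) * down n a b)
        = (σ n j * σ n (a + 1)) * down n a b := by rw [mul_assoc]
      _ = (σ n (a + 1) * σ n j) * down n a b := by rw [hc.eq]
      _ = σ n (a + 1) * (σ n j * down n a b) := by rw [mul_assoc]
      _ = σ n (a + 1) * (down n a b * σ n (j + 1)) := by rw [ih (by omega)]
      _ = σ n (a + 1) * down n a b * σ n (j + 1) := by rw [mul_assoc]

lemma slide_up_aux : ∀ m b a : ℕ, 1 ≤ b → b + m + 1 ≤ a → a ≤ n - 1 →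
    up n b a * σ n (b + m) = σ n (b + m + 1) * up n b a := by
  intro m
  induction m with
  | zero =>
    intro b a hb hja han
    rw [Nat.add_zero, up_cons (by omega : b ≤ a), up_cons (by omega : b + 1 ≤ a)]
    have hcomm : Commute (σ n b) (up n (b + 2) a) :=
      commute_sigma_up fun k hk1 hk2 =>
        sigma_comm' (j := b) (k := k) (Or.inl (by omega))
    have hbraid := σ_braid hb (by omega : b + 1 ≤ n - 1)
    calc σ n b * (σ n (b + 1) * up n (b + 2) a) * σ n b
        = σ n b * σ n (b + 1) * (up n (b + 2) a * σ n b) := by simp [mul_assoc]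
      _ = σ n b * σ n (b + 1) * (σ n b * up n (b + 2) a) := by rw [hcomm.symm.eq]
      _ = (σ n b * σ n (b + 1) * σ n b) * up n (b + 2) a := by simp [mul_assoc]
      _ = (σ n (b + 1) * σ n b * σ n (b + 1)) * up n (b + 2) a := by rw [hbraid]
      _ = σ n (b + 1) * (σ n b * (σ n (b + 1) * up n (b + 2) a)) := by simp [mul_assoc]
  | succ m ih =>
    intro b a hb hja han
    have hba : b ≤ a := by omega
    have e1 : b + (m + 1) = (b + 1) + m := by omega
    have hc : Commute (σ n b) (σ n ((b + 1) + m + 1)) :=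
      sigma_comm' (j := b) (k := (b + 1) + m + 1) (Or.inl (by omega))
    rw [up_cons hba, e1]
    calc σ n b * up n (b + 1) a * σ n ((b + 1) + m)
        = σ n b * (up n (b + 1) a * σ n ((b + 1) + m)) := by rw [mul_assoc]
      _ = σ n b * (σ n ((b + 1) + m + 1) * up n (b + 1) a) := by
          rw [ih (b + 1) a (by omega) (by omega) han]
      _ = (σ n b * σ n ((b + 1) + m + 1)) * up n (b + 1) a := by rw [mul_assoc]
      _ = (σ n ((b + 1) + m + 1) * σ n b) * up n (b + 1) a := by rw [hc.eq]
      _ = σ n ((b + 1) + m + 1) * (σ n b * up n (b + 1) a) := by rw [mul_assoc]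

lemma slide_up {j a b : ℕ} (hb : 1 ≤ b) (hbj : b ≤ j) (hja : j + 1 ≤ a) (han : a ≤ n - 1) :
    up n b a * σ n j = σ n (j + 1) * up n b a := by
  obtain ⟨m, rfl⟩ : ∃ m, j = b + m := ⟨j - b, by omega⟩
  exact slide_up_aux m b a hb (by omega) han


private lemma swap3 {G : Type*} [Semigroup G] {x y : G} (h : x * y = y * x) (z : G) :
    x * (y * z) = y * (x * z) := by rw [← mul_assoc, h, mul_assoc]

lemma bprime : ∀ a, 1 ≤ a → a ≤ n - 1 →
    σ n a * (down n (a - 1) 1 * down n a 1) = (down n (a - 1) 1 * down n a 1) * σ n 1 := by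
  intro a ha
  induction a, ha using Nat.le_induction with
  | base =>
    intro _
    have e : down n 1 1 = σ n 1 := by
      rw [down_cons le_rfl le_rfl, down_nil (by omega), mul_one]
    simp [e, down_nil (show (0:ℕ) < 1 by omega)]
  | succ a ha ih =>
    intro han
    have ih' := ih (by omega)
    have hd1 : down n (a + 1) 1 = σ n (a + 1) * down n a 1 := by
      rw [down_cons le_rfl (by omega), Nat.add_sub_cancel]
    have hd0 : down n a 1 = σ n a * down n (a - 1) 1 := down_cons le_rfl ha
    have hcomm : Commute (σ n (a + 1)) (down n (a - 1) 1) :=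
      commute_sigma_down fun k hk1 hk2 =>
        sigma_comm' (j := a + 1) (k := k) (Or.inr (by omega))
    have hbraid : σ n (a + 1) * σ n a * σ n (a + 1) = σ n a * σ n (a + 1) * σ n a :=
      (σ_braid ha han).symm
    rw [hd0] at ih'
    simp only [mul_assoc] at ih'
    rw [Nat.add_sub_cancel, hd1, hd0]
    simp only [mul_assoc]
    rw [swap3 hcomm.eq.symm, ← mul_assoc, ← mul_assoc, hbraid]
    simp only [mul_assoc]
    rw [ih', swap3 hcomm.eq]

lemma bprime_up : ∀ a, 1 ≤ a → a ≤ n - 1 →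
    (up n 1 a * up n 1 (a - 1)) * σ n a = σ n 1 * (up n 1 a * up n 1 (a - 1)) := by
  intro a ha
  induction a, ha using Nat.le_induction with
  | base =>
    intro _
    have e : up n 1 1 = σ n 1 := by
      rw [up_cons le_rfl, up_nil (by omega), mul_one]
    simp [e, up_nil (show (0:ℕ) < 1 by omega)]
  | succ a ha ih =>
    intro han
    have ih' := ih (by omega)
    have hu1 : up n 1 (a + 1) = up n 1 a * σ n (a + 1) := by
      rw [up_concat (by omega) (by omega), Nat.add_sub_cancel]
    have hu0 : up n 1 a = up n 1 (a - 1) * σ n a := up_concat ha ha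
    have hcomm : Commute (σ n (a + 1)) (up n 1 (a - 1)) :=
      commute_sigma_up fun k hk1 hk2 =>
        sigma_comm' (j := a + 1) (k := k) (Or.inr (by omega))
    have hbraid : σ n a * (σ n (a + 1) * σ n a) = σ n (a + 1) * (σ n a * σ n (a + 1)) := by
      have h := σ_braid ha han
      simp only [mul_assoc] at h
      exact h
    rw [hu0] at ih'
    simp only [mul_assoc] at ih'
    rw [Nat.add_sub_cancel, hu1, hu0]
    simp only [mul_assoc]
    rw [swap3 hcomm.eq, ← hbraid]
    have regroup : up n 1 (a-1) * (σ n a * (up n 1 (a-1) * (σ n a * (σ n (a+1) * σ n a))))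
        = (up n 1 (a-1) * (σ n a * (up n 1 (a-1) * σ n a))) * (σ n (a+1) * σ n a) := by
      simp only [mul_assoc]
    rw [regroup, ih']
    simp only [mul_assoc]
    rw [swap3 hcomm.eq.symm]


lemma sigma_delta {j : ℕ} (hj : 1 ≤ j) (hj2 : j + 1 ≤ n - 1) :
    σ n j * down n (n - 1) 1 = down n (n - 1) 1 * σ n (j + 1) :=
  slide_down le_rfl hj hj2 le_rfl

lemma sigma_delta_pow : ∀ m j : ℕ, 1 ≤ j → j + m ≤ n - 1 →
    σ n j * (down n (n - 1) 1) ^ m = (down n (n - 1) 1) ^ m * σ n (j + m) := by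
  intro m
  induction m with
  | zero => intro j _ _; simp
  | succ m ih =>
    intro j hj hjm
    have e : j + (m + 1) = (j + 1) + m := by omega
    rw [pow_succ', ← mul_assoc, sigma_delta hj (by omega), mul_assoc,
      ih (j + 1) (by omega) (by omega), e, ← mul_assoc, ← pow_succ']

lemma delta2 (hn : 2 ≤ n) :
    σ n (n - 1) * (down n (n - 1) 1 * down n (n - 1) 1)
      = (down n (n - 1) 1 * down n (n - 1) 1) * σ n 1 := by
  have hb := bprime (n - 1) (by omega) le_rfl
  have hd : down n (n - 1) 1 = σ n (n - 1) * down n (n - 1 - 1) 1 :=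
    down_cons le_rfl (by omega)
  rw [hd] at hb
  rw [hd]
  simp only [mul_assoc] at hb ⊢
  rw [hb]

lemma central (hn : 2 ≤ n) {j : ℕ} (hj1 : 1 ≤ j) (hj2 : j ≤ n - 1) :
    Commute (σ n j) ((down n (n - 1) 1) ^ n) := by
  show σ n j * (down n (n - 1) 1) ^ n = (down n (n - 1) 1) ^ n * σ n j
  have hsplit : (down n (n - 1) 1) ^ n
      = (down n (n - 1) 1) ^ (n - 1 - j) * (down n (n - 1) 1) ^ 2 * (down n (n - 1) 1) ^ (j - 1) := by
    rw [← pow_add, ← pow_add]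
    congr 1
    omega
  have e1 : j + (n - 1 - j) = n - 1 := by omega
  have h1 : σ n j * (down n (n - 1) 1) ^ (n - 1 - j)
      = (down n (n - 1) 1) ^ (n - 1 - j) * σ n (n - 1) := by
    rw [sigma_delta_pow (n - 1 - j) j hj1 (by omega), e1]
  have h2 : σ n (n - 1) * (down n (n - 1) 1) ^ 2
      = (down n (n - 1) 1) ^ 2 * σ n 1 := by
    rw [pow_two, delta2 hn]
  have e3 : 1 + (j - 1) = j := by omega
  have h3 : σ n 1 * (down n (n - 1) 1) ^ (j - 1)
      = (down n (n - 1) 1) ^ (j - 1) * σ n j := by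
    rw [sigma_delta_pow (j - 1) 1 le_rfl (by omega), e3]
  rw [hsplit, ← mul_assoc, ← mul_assoc, h1, mul_assoc, mul_assoc]
  rw [← mul_assoc (σ n (n-1)), h2]
  simp only [mul_assoc]
  rw [h3]

/-- The half twist written as `d_1 d_2 ⋯ d_k` with `d_a = σ_a ⋯ σ_1`. -/
def Dprod (n k : ℕ) : BraidGroup n := ((List.range' 1 k).map (fun a => down n a 1)).prod

lemma Dprod_zero : Dprod n 0 = 1 := rfl

lemma Dprod_succ (k : ℕ) : Dprod n (k + 1) = Dprod n k * down n (k + 1) 1 := by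
  unfold Dprod
  have e : 1 + 1 * k = k + 1 := by omega
  rw [List.range'_concat, e]
  simp

lemma commute_Dprod {x : BraidGroup n} {k : ℕ}
    (h : ∀ a, 1 ≤ a → a ≤ k → Commute x (down n a 1)) : Commute x (Dprod n k) := by
  refine Commute.list_prod_right _ _ ?_
  intro y hy
  simp only [List.mem_map, List.mem_range'_1] at hy
  obtain ⟨a, ⟨ha1, ha2⟩, rfl⟩ := hy
  exact h a ha1 (by omega)

lemma Dprod_sigma : ∀ k, k ≤ n - 1 → ∀ i, 1 ≤ i → i ≤ k →
    Dprod n k * σ n i = σ n (k + 1 - i) * Dprod n k := by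
  intro k
  induction k with
  | zero => intro _ i hi1 hi2; omega
  | succ k ih =>
    intro hk i hi1 hi2
    rcases Nat.lt_or_ge 1 i with hi | hi
    · -- 2 ≤ i : slide inside d_{k+1}
      have hslide : σ n (i - 1) * down n (k + 1) 1 = down n (k + 1) 1 * σ n i := by
        have := slide_down (n := n) le_rfl (by omega : 1 ≤ i - 1) (by omega : (i - 1) + 1 ≤ k + 1) hk
        have e : i - 1 + 1 = i := by omega
        rwa [e] at this
      have e2 : k + 1 - (i - 1) = k + 2 - i := by omega
      rw [Dprod_succ, mul_assoc, ← hslide, ← mul_assoc,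
        ih (by omega) (i - 1) (by omega) (by omega), e2, mul_assoc, ← Dprod_succ]
    · -- i = 1
      have hi0 : i = 1 := by omega
      subst hi0
      rcases Nat.eq_zero_or_pos k with hk0 | hkpos
      · subst hk0
        have e : down n 1 1 = σ n 1 := by
          rw [down_cons le_rfl le_rfl, down_nil (by omega), mul_one]
        rw [Dprod_succ, Dprod_zero, e]
        simp
      · -- k ≥ 1
        have hb := bprime (k + 1) (by omega) hk
        have ek : k + 1 - 1 = k := by omega
        rw [ek] at hb
        have hcomm : Commute (σ n (k + 1 + 1 - 1)) (Dprod n (k - 1)) := by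
          refine commute_Dprod fun a ha1 ha2 => ?_
          refine commute_sigma_down fun l hl1 hl2 => ?_
          exact sigma_comm' (j := k + 1 + 1 - 1) (k := l) (Or.inr (by omega))
        have eD : Dprod n k = Dprod n (k - 1) * down n k 1 := by
          have : k = (k - 1) + 1 := by omega
          conv_lhs => rw [this, Dprod_succ]
          rw [← this]
        have e4 : k + 1 + 1 - 1 = k + 1 := by omega
        rw [Dprod_succ, eD]
        calc Dprod n (k-1) * down n k 1 * down n (k+1) 1 * σ n 1
            = Dprod n (k-1) * (σ n (k+1) * (down n k 1 * down n (k+1) 1)) := by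
              simp only [mul_assoc]
              rw [hb]
              simp only [mul_assoc]
          _ = σ n (k+1) * Dprod n (k-1) * (down n k 1 * down n (k+1) 1) := by
              rw [e4] at hcomm
              rw [← mul_assoc, ← hcomm.eq]
          _ = σ n (k + 1 + 1 - 1) * (Dprod n (k-1) * down n k 1 * down n (k+1) 1) := by
              rw [e4]
              simp only [mul_assoc]


lemma commute_down_gen {x : BraidGroup n} {a b : ℕ}
    (h : ∀ k, b ≤ k → k ≤ a → Commute x (σ n k)) : Commute x (down n a b) :=
  commute_prod_rev _ _ h

lemma commute_up_gen {x : BraidGroup n} {a b : ℕ}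
    (h : ∀ k, a ≤ k → k ≤ b → Commute x (σ n k)) : Commute x (up n a b) :=
  commute_prod _ _ h

lemma commute_deltan_sigma (hn : 2 ≤ n) (k : ℕ) :
    Commute ((down n (n - 1) 1) ^ n) (σ n k) := by
  by_cases hk : 1 ≤ k ∧ k ≤ n - 1
  · exact (central hn hk.1 hk.2).symm
  · rw [sigma_out hk]; exact Commute.one_right _

lemma Dprod_down (hn : 2 ≤ n) : ∀ a, 1 ≤ a → a ≤ n - 1 →
    Dprod n (n - 1) * down n a 1 = up n (n - a) (n - 1) * Dprod n (n - 1) := by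
  intro a ha
  induction a, ha using Nat.le_induction with
  | base =>
    intro _
    have e : down n 1 1 = σ n 1 := by
      rw [down_cons le_rfl le_rfl, down_nil (by omega), mul_one]
    have e2 : up n (n - 1) (n - 1) = σ n (n - 1) := by
      rw [up_cons le_rfl, up_nil (by omega), mul_one]
    have h := Dprod_sigma (n - 1) le_rfl 1 le_rfl (by omega)
    have e3 : n - 1 + 1 - 1 = n - 1 := by omega
    rw [e, e2, h, e3]
  | succ a ha ih =>
    intro han
    have ih' := ih (by omega)
    have hd : down n (a + 1) 1 = σ n (a + 1) * down n a 1 := by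
      rw [down_cons le_rfl (by omega), Nat.add_sub_cancel]
    have hD := Dprod_sigma (n - 1) le_rfl (a + 1) (by omega) han
    have e1 : n - 1 + 1 - (a + 1) = n - (a + 1) := by omega
    rw [e1] at hD
    have hu : up n (n - (a + 1)) (n - 1) = σ n (n - (a + 1)) * up n (n - a) (n - 1) := by
      rw [up_cons (by omega)]
      congr 2
      omega
    rw [hd, ← mul_assoc, hD, mul_assoc, ih', hu, mul_assoc]

lemma Dprod_deltapow (hn : 2 ≤ n) : ∀ m : ℕ,
    Dprod n (n - 1) * (down n (n - 1) 1) ^ m = (up n 1 (n - 1)) ^ m * Dprod n (n - 1) := by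
  intro m
  induction m with
  | zero => simp
  | succ m ih =>
    have hbase := Dprod_down hn (n - 1) (by omega) le_rfl
    have e : n - (n - 1) = 1 := by omega
    rw [e] at hbase
    rw [pow_succ, ← mul_assoc, ih, mul_assoc, hbase, ← mul_assoc, ← pow_succ]

lemma Un_eq_deltan (hn : 2 ≤ n) :
    (up n 1 (n - 1)) ^ n = (down n (n - 1) 1) ^ n := by
  have h := Dprod_deltapow hn n
  have hc : Commute ((down n (n - 1) 1) ^ n) (Dprod n (n - 1)) :=
    commute_Dprod fun a _ _ => commute_down_gen fun k _ _ => commute_deltan_sigma hn k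
  rw [← hc.eq] at h
  exact (mul_right_cancel h).symm

lemma U_down (hn : 2 ≤ n) : ∀ m, m ≤ n - 2 →
    up n 1 (n - 1) * down n m 1 = down n (m + 1) 2 * up n 1 (n - 1) := by
  intro m
  induction m with
  | zero =>
    intro _
    rw [down_nil (by omega), down_nil (by omega), mul_one, one_mul]
  | succ m ih =>
    intro hm
    have hd : down n (m + 1) 1 = σ n (m + 1) * down n m 1 := by
      rw [down_cons le_rfl (by omega), Nat.add_sub_cancel]
    have hs : up n 1 (n - 1) * σ n (m + 1) = σ n (m + 2) * up n 1 (n - 1) := by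
      have := slide_up (n := n) (j := m + 1) (a := n - 1) (b := 1) le_rfl (by omega)
        (by omega) le_rfl
      exact this
    have hd2 : down n (m + 2) 2 = σ n (m + 2) * down n (m + 1) 2 := by
      rw [down_cons (by omega) (by omega)]
      norm_num
    rw [hd, ← mul_assoc, hs, mul_assoc, ih (by omega), hd2, mul_assoc]

lemma K1'' (hn : 2 ≤ n) : ∀ m k : ℕ, k = n - m → 2 ≤ k → k ≤ n →
    σ n 1 * up n 1 (n - 1) * down n (n - 1) k * up n 1 (n - 1)
      = up n 1 (n - 1) * up n 1 (n - 1) * down n (n - 1) (k - 1) := by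
  intro m
  induction m with
  | zero =>
    intro k hk _ _
    have hkn : k = n := by omega
    rw [hkn]
    rw [down_nil (by omega : n - 1 < n)]
    have hE : down n (n - 1) (n - 1) = σ n (n - 1) := by
      rw [down_cons (by omega) le_rfl, down_nil (by omega), mul_one]
    have hU2 : up n 1 (n - 1) = up n 1 (n - 2) * σ n (n - 1) := by
      have h' := up_concat (n := n) (a := 1) (b := n - 1) (by omega) (by omega)
      have e : n - 1 - 1 = n - 2 := by omega
      rwa [e] at h'
    have hbp := bprime_up (n - 1) (by omega) le_rfl
    have e : n - 1 - 1 = n - 2 := by omega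
    rw [e] at hbp
    rw [hE, mul_one]
    calc σ n 1 * up n 1 (n - 1) * up n 1 (n - 1)
        = σ n 1 * (up n 1 (n - 1) * up n 1 (n - 2)) * σ n (n - 1) := by
          rw [hU2]; simp only [mul_assoc]
      _ = (up n 1 (n - 1) * up n 1 (n - 2)) * σ n (n - 1) * σ n (n - 1) := by
          rw [← hbp]
      _ = up n 1 (n - 1) * (up n 1 (n - 2) * σ n (n - 1)) * σ n (n - 1) := by
          simp only [mul_assoc]
      _ = up n 1 (n - 1) * up n 1 (n - 1) * σ n (n - 1) := by rw [← hU2]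
  | succ m ih =>
    intro k hk h2 hkn
    have hklt : k ≤ n - 1 := by omega
    have ih' := ih (k + 1) (by omega) (by omega) (by omega)
    have e1 : k + 1 - 1 = k := by omega
    rw [e1] at ih'
    have hE : down n (n - 1) k = down n (n - 1) (k + 1) * σ n k := down_concat hklt
    have hs : up n 1 (n - 1) * σ n (k - 1) = σ n k * up n 1 (n - 1) := by
      have := slide_up (n := n) (j := k - 1) (a := n - 1) (b := 1) le_rfl (by omega)
        (by omega) le_rfl
      have e : k - 1 + 1 = k := by omega
      rwa [e] at this
    have hE2 : down n (n - 1) (k - 1) = down n (n - 1) k * σ n (k - 1) := by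
      have := down_concat (n := n) (a := n - 1) (b := k - 1) (by omega)
      have e : k - 1 + 1 = k := by omega
      rwa [e] at this
    rw [hE, hE2]
    calc σ n 1 * up n 1 (n - 1) * (down n (n - 1) (k + 1) * σ n k) * up n 1 (n - 1)
        = σ n 1 * up n 1 (n - 1) * down n (n - 1) (k + 1) * (σ n k * up n 1 (n - 1)) := by
          simp only [mul_assoc]
      _ = σ n 1 * up n 1 (n - 1) * down n (n - 1) (k + 1) * (up n 1 (n - 1) * σ n (k - 1)) := by
          rw [hs]
      _ = (σ n 1 * up n 1 (n - 1) * down n (n - 1) (k + 1) * up n 1 (n - 1)) * σ n (k - 1) := by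
          simp only [mul_assoc]
      _ = up n 1 (n - 1) * up n 1 (n - 1) * (down n (n - 1) k * σ n (k - 1)) := by
          rw [ih']
          simp only [mul_assoc]

lemma K1 (hn : 2 ≤ n) {k : ℕ} (h2 : 2 ≤ k) (hkn : k ≤ n) :
    flip n k * up n 1 (n - 1) = up n 1 (n - 1) * flip n (k - 1) := by
  unfold flip
  have hdk : down n (k - 1) 1 = down n (k - 1) 2 * σ n 1 := down_concat (by omega)
  have hUd : up n 1 (n - 1) * down n (k - 2) 1 = down n (k - 1) 2 * up n 1 (n - 1) := by
    have := U_down hn (k - 2) (by omega)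
    have e : k - 2 + 1 = k - 1 := by omega
    rwa [e] at this
  have hK := K1'' hn (n - k) k (by omega) h2 hkn
  have e2 : k - 1 - 1 = k - 2 := by omega
  rw [hdk, e2]
  calc down n (k - 1) 2 * σ n 1 * up n 1 (n - 1) * down n (n - 1) k * up n 1 (n - 1)
      = down n (k - 1) 2 * (σ n 1 * up n 1 (n - 1) * down n (n - 1) k * up n 1 (n - 1)) := by
        simp only [mul_assoc]
    _ = down n (k - 1) 2 * (up n 1 (n - 1) * up n 1 (n - 1) * down n (n - 1) (k - 1)) := by
        rw [hK]
    _ = (down n (k - 1) 2 * up n 1 (n - 1)) * up n 1 (n - 1) * down n (n - 1) (k - 1) := by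
        simp only [mul_assoc]
    _ = up n 1 (n - 1) * (down n (k - 2) 1 * up n 1 (n - 1) * down n (n - 1) (k - 1)) := by
        rw [← hUd]
        simp only [mul_assoc]

lemma flip_one (hn : 2 ≤ n) : flip n 1 = up n 1 (n - 1) * down n (n - 1) 1 := by
  unfold flip
  rw [down_nil (a := 1 - 1) (b := 1) (by omega), one_mul]

lemma flip_n (hn : 2 ≤ n) : flip n n = down n (n - 1) 1 * up n 1 (n - 1) := by
  unfold flip
  rw [down_nil (a := n - 1) (b := n) (by omega), mul_one]

lemma rU (hn : 2 ≤ n) : ∀ j, 1 ≤ j → j ≤ n →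
    flip n j * (up n 1 (n - 1)) ^ j
      = (up n 1 (n - 1)) ^ j * (down n (n - 1) 1 * up n 1 (n - 1)) := by
  intro j hj
  induction j, hj using Nat.le_induction with
  | base =>
    intro _
    rw [pow_one, flip_one hn]
    simp only [mul_assoc]
  | succ j hj ih =>
    intro hjn
    have ih' := ih (by omega)
    have hK := K1 hn (k := j + 1) (by omega) hjn
    rw [Nat.add_sub_cancel] at hK
    rw [pow_succ', ← mul_assoc, hK, mul_assoc, ih']
    simp only [mul_assoc]

lemma flipsDown_nil {a b : ℕ} (h : a < b) : flipsDown n a b = 1 := by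
  unfold flipsDown
  have h0 : a + 1 - b = 0 := by omega
  rw [h0]; rfl

lemma flipsDown_cons {a b : ℕ} (hb : 1 ≤ b) (h : b ≤ a) :
    flipsDown n a b = flip n a * flipsDown n (a - 1) b := by
  unfold flipsDown
  have h1 : a + 1 - b = (a - b) + 1 := by omega
  have h2 : a - 1 + 1 - b = a - b := by omega
  have h3 : b + 1 * (a - b) = a := by omega
  rw [h1, h2, List.range'_concat, h3]
  simp

lemma flipsDown_append {a b c : ℕ} (hb : 1 ≤ b) (hbc : b ≤ c) (hca : c ≤ a + 1) :
    flipsDown n a b = flipsDown n a c * flipsDown n (c - 1) b := by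
  unfold flipsDown
  have h1 : a + 1 - b = (c - b) + (a + 1 - c) := by omega
  have h2 : c - 1 + 1 - b = c - b := by omega
  have h3 : b + 1 * (c - b) = c := by omega
  rw [h1, h2, ← List.range'_append, h3, List.reverse_append, List.map_append, List.prod_append]

lemma commute_flipsDown {x : BraidGroup n} {a b : ℕ}
    (h : ∀ i, b ≤ i → i ≤ a → Commute x (flip n i)) : Commute x (flipsDown n a b) :=
  commute_prod_rev _ _ h

lemma Nlemma (hn : 2 ≤ n) : ∀ m, m ≤ n - 1 →
    flipsDown n n (n - m) * (up n 1 (n - 1)) ^ (n - m - 1)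
      = (down n (n - 1) 1) ^ (m + 1) * (up n 1 (n - 1)) ^ n := by
  intro m
  induction m with
  | zero =>
    intro _
    have e0 : n - 0 = n := by omega
    have hF : flipsDown n n n = flip n n := by
      rw [flipsDown_cons (by omega) le_rfl, flipsDown_nil (by omega), mul_one]
    have hUp : (up n 1 (n - 1)) ^ n = up n 1 (n - 1) * (up n 1 (n - 1)) ^ (n - 1) := by
      conv_rhs => rw [← pow_succ']
      congr 1
      omega
    rw [e0, hF, flip_n hn, pow_one, hUp, mul_assoc]
  | succ m ih =>
    intro hm
    have ih' := ih (by omega)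
    set U := up n 1 (n - 1) with hU
    set d := down n (n - 1) 1 with hd
    have hk2 : 2 ≤ n - m := by omega
    have hF : flipsDown n n (n - (m + 1)) = flipsDown n n (n - m) * flip n (n - m - 1) := by
      rw [flipsDown_append (n := n) (a := n) (b := n - (m + 1)) (c := n - m) (by omega)
        (by omega) (by omega)]
      congr 1
      · rw [show n - (m + 1) = n - m - 1 by omega,
          flipsDown_cons (by omega) le_rfl, flipsDown_nil (by omega), mul_one]
    have hrU := rU hn (n - m - 1) (by omega) (by omega)
    have hUd : U ^ n * d = d * U ^ n := by
      rw [hU, hd, Un_eq_deltan hn, ← pow_succ, ← pow_succ']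
    refine mul_right_cancel (b := U) ?_
    have e1 : n - (m + 1) - 1 + 1 = n - m - 1 := by omega
    have e2 : n - m - 1 - 1 + 1 = n - m - 1 := by omega
    calc flipsDown n n (n - (m + 1)) * U ^ (n - (m + 1) - 1) * U
        = flipsDown n n (n - m) * (flip n (n - m - 1) * U ^ (n - m - 1)) := by
          rw [hF, mul_assoc, mul_assoc, ← pow_succ, e1]
      _ = flipsDown n n (n - m) * (U ^ (n - m - 1) * (d * U)) := by rw [hrU]
      _ = (flipsDown n n (n - m) * U ^ (n - m - 1)) * (d * U) := by
          simp only [mul_assoc]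
      _ = d ^ (m + 1) * (U ^ n * d) * U := by rw [ih']; simp only [mul_assoc]
      _ = d ^ (m + 1) * (d * U ^ n) * U := by rw [hUd]
      _ = d ^ (m + 1 + 1) * U ^ n * U := by rw [← mul_assoc, ← pow_succ]

lemma flipsDown_eq_twist (hn : 2 ≤ n) :
    flipsDown n n 1 = (down n (n - 1) 1) ^ n * (down n (n - 1) 1) ^ n := by
  have h := Nlemma hn (n - 1) le_rfl
  have e1 : n - (n - 1) = 1 := by omega
  have e3 : n - 1 + 1 = n := by omega
  rw [e1, show (1:ℕ) - 1 = 0 from by omega, e3, pow_zero, mul_one, Un_eq_deltan hn] at h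
  exact h


private lemma swap3' {G : Type*} [Semigroup G] {x y z : G} (h : x * y = y * z) (w : G) :
    x * (y * w) = y * (z * w) := by rw [← mul_assoc, h, mul_assoc]

lemma rel2 {j : ℕ} (hj1 : 1 ≤ j) (hj2 : j ≤ n - 1) :
    σ n j * flip n j = flip n (j + 1) * σ n j := by
  unfold flip
  rw [Nat.add_sub_cancel, down_concat hj2, down_cons le_rfl hj1]
  simp only [mul_assoc]

lemma rel1a {i j : ℕ} (hi : 1 ≤ i) (hij : i + 1 ≤ j) (hj : j ≤ n - 1) :
    σ n j * flip n i = flip n i * σ n j := by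
  unfold flip
  have hc : Commute (σ n j) (down n (i - 1) 1) :=
    commute_down_gen fun k hk1 hk2 => sigma_comm' (j := j) (k := k) (Or.inr (by omega))
  have hU : σ n j * up n 1 (n - 1) = up n 1 (n - 1) * σ n (j - 1) := by
    have h' := slide_up (n := n) (j := j - 1) (a := n - 1) (b := 1) le_rfl (by omega)
      (by omega) le_rfl
    have e : j - 1 + 1 = j := by omega
    rw [e] at h'
    exact h'.symm
  have hE : σ n (j - 1) * down n (n - 1) i = down n (n - 1) i * σ n j := by
    have h' := slide_down (n := n) (j := j - 1) (a := n - 1) (b := i) hi (by omega)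
      (by omega) le_rfl
    have e : j - 1 + 1 = j := by omega
    rwa [e] at h'
  simp only [mul_assoc]
  rw [swap3 hc.eq, swap3' hU, hE]

lemma rel1b {i j : ℕ} (hj : 1 ≤ j) (hij : j + 2 ≤ i) (hin : i ≤ n) :
    σ n j * flip n i = flip n i * σ n j := by
  unfold flip
  have hd : σ n j * down n (i - 1) 1 = down n (i - 1) 1 * σ n (j + 1) :=
    slide_down le_rfl hj (by omega) (by omega)
  have hu : σ n (j + 1) * up n 1 (n - 1) = up n 1 (n - 1) * σ n j :=
    (slide_up le_rfl hj (by omega) le_rfl).symm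
  have hc : Commute (σ n j) (down n (n - 1) i) :=
    commute_down_gen fun k hk1 hk2 => sigma_comm' (j := j) (k := k) (Or.inl (by omega))
  simp only [mul_assoc]
  rw [swap3' hd, swap3' hu, hc.eq]

lemma relC (hn : 2 ≤ n) {j : ℕ} (hj1 : 1 ≤ j) (hj2 : j ≤ n - 1) :
    σ n j * (flip n (j + 1) * flip n j) = (flip n (j + 1) * flip n j) * σ n j := by
  have hs1 : flipsDown n n 1 = flipsDown n n j * flipsDown n (j - 1) 1 :=
    flipsDown_append le_rfl hj1 (by omega)
  have hs2 : flipsDown n n j = flipsDown n n (j + 2) * flipsDown n (j + 1) j := by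
    have h' := flipsDown_append (n := n) (a := n) (b := j) (c := j + 2) hj1 (by omega)
      (by omega)
    rwa [show j + 2 - 1 = j + 1 by omega] at h'
  have hs3 : flipsDown n (j + 1) j = flip n (j + 1) * (flip n j * 1) := by
    rw [flipsDown_cons hj1 (by omega), Nat.add_sub_cancel, flipsDown_cons hj1 le_rfl,
      flipsDown_nil (by omega)]
  have hA : Commute (σ n j) (flipsDown n n (j + 2)) :=
    commute_flipsDown fun i hi1 hi2 => rel1b hj1 (by omega) (by omega)
  have hB : Commute (σ n j) (flipsDown n (j - 1) 1) :=
    commute_flipsDown fun i hi1 hi2 => rel1a hi1 (by omega) hj2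
  have hT : Commute (σ n j) (flipsDown n n 1) := by
    rw [flipsDown_eq_twist hn]
    exact (central hn hj1 hj2).mul_right (central hn hj1 hj2)
  have h := hT.eq
  rw [hs1, hs2, hs3] at h
  simp only [mul_assoc, mul_one] at h
  rw [swap3 hA.eq, ← hB.eq] at h
  have h2 := mul_left_cancel h
  refine mul_right_cancel (b := flipsDown n (j - 1) 1) ?_
  calc σ n j * (flip n (j + 1) * flip n j) * flipsDown n (j - 1) 1
      = σ n j * (flip n (j + 1) * (flip n j * flipsDown n (j - 1) 1)) := by
        simp only [mul_assoc]
    _ = flip n (j + 1) * (flip n j * (σ n j * flipsDown n (j - 1) 1)) := h2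
    _ = flip n (j + 1) * flip n j * σ n j * flipsDown n (j - 1) 1 := by
        simp only [mul_assoc]

lemma flip_mem {i : ℕ} (h1 : 1 ≤ i) (h2 : i ≤ n) : flip n i ∈ R' n :=
  Subgroup.subset_closure ⟨i, ⟨h1, h2⟩, rfl⟩

lemma conj_mem_of_gen {g : BraidGroup n}
    (hg : ∀ s ∈ flip n '' Set.Icc 1 n, g * s * g⁻¹ ∈ R' n) {h : BraidGroup n}
    (hh : h ∈ R' n) : g * h * g⁻¹ ∈ R' n := by
  refine Subgroup.closure_induction (k := flip n '' Set.Icc 1 n)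
    (p := fun x _ => g * x * g⁻¹ ∈ R' n) ?_ ?_ ?_ ?_ hh
  · exact fun x hx => hg x hx
  · simpa using (R' n).one_mem
  · intro x y _ _ px py
    have e : g * (x * y) * g⁻¹ = (g * x * g⁻¹) * (g * y * g⁻¹) := by group
    rw [e]; exact mul_mem px py
  · intro x _ px
    have e : g * x⁻¹ * g⁻¹ = (g * x * g⁻¹)⁻¹ := by group
    rw [e]; exact inv_mem px

lemma sigma_conj (hn : 2 ≤ n) {j : ℕ} (hj1 : 1 ≤ j) (hj2 : j ≤ n - 1) :
    ∀ s ∈ flip n '' Set.Icc 1 n,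
      σ n j * s * (σ n j)⁻¹ ∈ R' n ∧ (σ n j)⁻¹ * s * σ n j ∈ R' n := by
  rintro s ⟨i, ⟨hi1, hi2⟩, rfl⟩
  rcases Nat.lt_trichotomy i j with hlt | heq | hgt
  · -- i < j : commuting
    have hcomm := rel1a hi1 (by omega) hj2
    constructor
    · have e : σ n j * flip n i * (σ n j)⁻¹ = flip n i := by rw [hcomm]; group
      rw [e]; exact flip_mem hi1 hi2
    · have e : (σ n j)⁻¹ * flip n i * σ n j = flip n i := by
        rw [mul_assoc, ← hcomm]; group
      rw [e]; exact flip_mem hi1 hi2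
  · -- i = j
    subst heq
    have h2 := rel2 hj1 hj2
    have hC := relC hn hj1 hj2
    constructor
    · have e : σ n i * flip n i * (σ n i)⁻¹ = flip n (i + 1) := by rw [h2]; group
      rw [e]; exact flip_mem (by omega) (by omega)
    · have e1 : (σ n i)⁻¹ * flip n (i + 1) * σ n i = flip n i := by
        rw [mul_assoc, ← h2]; group
      have e2 : (σ n i)⁻¹ * (flip n (i + 1) * flip n i) * σ n i
          = flip n (i + 1) * flip n i := by
        rw [mul_assoc, ← hC]; group
      have e3 : (σ n i)⁻¹ * flip n i * σ n i
          = ((σ n i)⁻¹ * flip n (i + 1) * σ n i)⁻¹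
            * ((σ n i)⁻¹ * (flip n (i + 1) * flip n i) * σ n i) := by group
      rw [e3, e1, e2]
      exact mul_mem (inv_mem (flip_mem hi1 hi2))
        (mul_mem (flip_mem (by omega) (by omega)) (flip_mem hi1 hi2))
  · -- j < i
    rcases Nat.lt_or_ge i (j + 2) with hi' | hi'
    · -- i = j + 1
      have hij : i = j + 1 := by omega
      subst hij
      have h2 := rel2 hj1 hj2
      have hC := relC hn hj1 hj2
      constructor
      · have e1 : σ n j * (flip n (j + 1) * flip n j) * (σ n j)⁻¹
            = flip n (j + 1) * flip n j := by rw [hC]; group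
        have e2 : σ n j * flip n j * (σ n j)⁻¹ = flip n (j + 1) := by rw [h2]; group
        have e3 : σ n j * flip n (j + 1) * (σ n j)⁻¹
            = (σ n j * (flip n (j + 1) * flip n j) * (σ n j)⁻¹)
              * (σ n j * flip n j * (σ n j)⁻¹)⁻¹ := by group
        rw [e3, e1, e2]
        exact mul_mem (mul_mem (flip_mem (by omega) hi2) (flip_mem hj1 (by omega)))
          (inv_mem (flip_mem (by omega) hi2))
      · have e1 : (σ n j)⁻¹ * flip n (j + 1) * σ n j = flip n j := by
          rw [mul_assoc, ← h2]; group
        rw [e1]; exact flip_mem hj1 (by omega)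
    · -- i ≥ j + 2 : commuting
      have hcomm := rel1b hj1 hi' hi2
      constructor
      · have e : σ n j * flip n i * (σ n j)⁻¹ = flip n i := by rw [hcomm]; group
        rw [e]; exact flip_mem hi1 hi2
      · have e : (σ n j)⁻¹ * flip n i * σ n j = flip n i := by
          rw [mul_assoc, ← hcomm]; group
        rw [e]; exact flip_mem hi1 hi2

lemma of_eq_sigma (j : Fin (n - 1)) :
    σ n (j.val + 1) = PresentedGroup.of (rels := braidRels (n - 1)) j := by
  have hlt := j.isLt
  have hcond : 1 ≤ j.val + 1 ∧ j.val + 1 ≤ n - 1 := ⟨by omega, by omega⟩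
  rw [show σ n (j.val + 1) = (PresentedGroup.of ⟨j.val + 1 - 1, by omega⟩ : BraidGroup n) from
    dif_pos hcond]
  exact congrArg _ (Fin.ext (by simp))

lemma sigma_gen :
    Subgroup.closure (Set.range fun i : Fin (n - 1) => σ n (i.val + 1))
      = (⊤ : Subgroup (BraidGroup n)) := by
  rw [eq_top_iff]
  have htop : (⊤ : Subgroup (BraidGroup n))
      ≤ Subgroup.closure (Set.range (PresentedGroup.of (rels := braidRels (n - 1)))) :=
    (PresentedGroup.closure_range_of (braidRels (n - 1))).ge
  refine le_trans htop (Subgroup.closure_mono ?_)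
  rintro x ⟨j, rfl⟩
  exact ⟨j, of_eq_sigma j⟩

lemma conj_mem_all (hn : 2 ≤ n) :
    ∀ g : BraidGroup n, ∀ h ∈ R' n, g * h * g⁻¹ ∈ R' n ∧ g⁻¹ * h * g ∈ R' n := by
  intro g
  have hg : g ∈ Subgroup.closure (Set.range fun i : Fin (n - 1) => σ n (i.val + 1)) := by
    rw [sigma_gen]; exact Subgroup.mem_top g
  refine Subgroup.closure_induction
    (p := fun g _ => ∀ h ∈ R' n, g * h * g⁻¹ ∈ R' n ∧ g⁻¹ * h * g ∈ R' n)
    ?_ ?_ ?_ ?_ hg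
  · rintro x ⟨j, rfl⟩ h hh
    have hj1 : 1 ≤ j.val + 1 := by omega
    have hj2 : j.val + 1 ≤ n - 1 := by have := j.isLt; omega
    constructor
    · exact conj_mem_of_gen (fun s hs => (sigma_conj hn hj1 hj2 s hs).1) hh
    · have key := conj_mem_of_gen (g := (σ n (j.val + 1))⁻¹)
        (fun s hs => by simpa using (sigma_conj hn hj1 hj2 s hs).2) hh
      simpa using key
  · intro h hh
    constructor <;> simpa using hh
  · intro x y _ _ px py h hh
    constructor
    · have h1 := (py h hh).1
      have h2 := (px _ h1).1
      have e : x * y * h * (x * y)⁻¹ = x * (y * h * y⁻¹) * x⁻¹ := by group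
      rw [e]; exact h2
    · have h1 := (px h hh).2
      have h2 := (py _ h1).2
      have e : (x * y)⁻¹ * h * (x * y) = y⁻¹ * (x⁻¹ * h * x) * y := by group
      rw [e]; exact h2
  · intro x _ px h hh
    constructor
    · have h1 := (px h hh).2
      have e : x⁻¹ * h * x⁻¹⁻¹ = x⁻¹ * h * x := by rw [inv_inv]
      rw [e]; exact h1
    · have h1 := (px h hh).1
      have e : x⁻¹⁻¹ * h * x⁻¹ = x * h * x⁻¹ := by rw [inv_inv]
      rw [e]; exact h1

end NormalityLemmas




/-- The subgroup `R_n'` of `B_n` generated by the flips `r_1, …, r_n` is normal in `B_n`;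
equivalently, the normal closure of `{r_1, …, r_n}` equals the subgroup they generate. -/
theorem R'_normal (n : ℕ) (hn : 2 ≤ n) :
    (R' n).Normal ∧ Subgroup.normalClosure (flip n '' Set.Icc 1 n) = R' n := by
  have hnormal : (R' n).Normal := ⟨fun h hh g => (conj_mem_all hn g h hh).1⟩
  refine ⟨hnormal, le_antisymm ?_ ?_⟩
  · haveI := hnormal
    exact Subgroup.normalClosure_le_normal Subgroup.subset_closure
  · exact (Subgroup.closure_le _).mpr Subgroup.subset_normalClosure

end Braid
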